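/- Let k ∈ ℝ with k ≠ 0, let I ⊆ {r > 0 : r² + k > 0} be a nonempty open interval, and set f(r) := r² + k. Then a twice continuously differentiable function β : I → ℝ satisfies f'β' − β f'' + 2 f β'' = 0 on I (equivalently 2r β' − 2β + 2(r²+k) β'' = 0) if and only if there are constants c̃, ĉ ∈ ℝ such that β(r) = −(ĉ/k) r + c̃ √(r² + k) for all r ∈ I. -/

import Mathlib

lemma const_of_hasDerivAt_zero {I : Set ℝ} (hIopen : IsOpen I) (hconv : Convex ℝ I)
    {f : ℝ → ℝ} (h : ∀ x ∈ I, HasDerivAt f 0 x) {x y : ℝ} (hx : x ∈ I) (hy : y ∈ I) :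
    f x = f y := by
  refine hconv.is_const_of_fderivWithin_eq_zero
    (fun z hz => (h z hz).differentiableAt.differentiableWithinAt) (fun z hz => ?_) hx hy
  rw [fderivWithin_of_isOpen hIopen hz, (h z hz).hasFDerivAt.fderiv]
  ext; simp

lemma sqrt_hasDerivAt {k r : ℝ} (h : 0 < r ^ 2 + k) :
    HasDerivAt (fun x => Real.sqrt (x ^ 2 + k)) (r / Real.sqrt (r ^ 2 + k)) r := by
  have h1 : HasDerivAt (fun x : ℝ => x ^ 2 + k) (2 * r) r := by
    simpa using (hasDerivAt_pow 2 r).add_const k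
  have h2 := (Real.hasDerivAt_sqrt h.ne').comp r h1
  refine h2.congr_deriv (Eq.symm ?_)
  have hs : Real.sqrt (r ^ 2 + k) ≠ 0 := (Real.sqrt_pos.mpr h).ne'
  field_simp


theorem radial_static_potential_BK (k : ℝ) (hk : k ≠ 0)
    (I : Set ℝ) (hIopen : IsOpen I) (hIconn : IsPreconnected I) (hIne : I.Nonempty)
    (hIsub : I ⊆ {r : ℝ | 0 < r ∧ 0 < r ^ 2 + k})
    (β : ℝ → ℝ) (hβ : ContDiffOn ℝ 2 β I) :
    (∀ r ∈ I, 2 * r * deriv β r - 2 * β r + 2 * (r ^ 2 + k) * deriv (deriv β) r = 0) ↔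
    ∃ ct ch : ℝ, ∀ r ∈ I, β r = -(ch / k) * r + ct * Real.sqrt (r ^ 2 + k) := by
  obtain ⟨r₀, hr₀⟩ := hIne
  have hconv : Convex ℝ I := convex_iff_ordConnected.mpr hIconn.ordConnected
  have hβ1 : DifferentiableOn ℝ β I := hβ.differentiableOn (by norm_num)
  have hβd : ContDiffOn ℝ 1 (deriv β) I := by
    exact hβ.deriv_of_isOpen hIopen (by norm_num)
  have hβd1 : DifferentiableOn ℝ (deriv β) I := hβd.differentiableOn (by norm_num)
  have hd1 : ∀ r ∈ I, HasDerivAt β (deriv β r) r := fun r hr =>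
    ((hβ1 r hr).differentiableAt (hIopen.mem_nhds hr)).hasDerivAt
  have hd2 : ∀ r ∈ I, HasDerivAt (deriv β) (deriv (deriv β) r) r := fun r hr =>
    ((hβd1 r hr).differentiableAt (hIopen.mem_nhds hr)).hasDerivAt
  constructor
  · intro hode
    set F : ℝ → ℝ := fun r => (r ^ 2 + k) * deriv β r - r * β r with hFdef
    have hF : ∀ r ∈ I, HasDerivAt F 0 r := by
      intro r hr
      have h1 : HasDerivAt (fun x : ℝ => x ^ 2 + k) (2 * r) r := by
        simpa using (hasDerivAt_pow 2 r).add_const k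
      have h2 := (h1.mul (hd2 r hr)).sub ((hasDerivAt_id r).mul (hd1 r hr))
      refine h2.congr_deriv (Eq.symm ?_)
      have := hode r hr
      simp only [id_eq]
      linarith
    set C : ℝ := F r₀ with hCdef
    have hFC : ∀ r ∈ I, F r = C := fun r hr =>
      const_of_hasDerivAt_zero hIopen hconv hF hr hr₀
    set G : ℝ → ℝ := fun r => (β r - C / k * r) / Real.sqrt (r ^ 2 + k) with hGdef
    have hG : ∀ r ∈ I, HasDerivAt G 0 r := by
      intro r hr
      obtain ⟨hr1, hr2⟩ := hIsub hr
      have hs : (0 : ℝ) < Real.sqrt (r ^ 2 + k) := Real.sqrt_pos.mpr hr2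
      have hs2 : Real.sqrt (r ^ 2 + k) ^ 2 = r ^ 2 + k := Real.sq_sqrt hr2.le
      have hnum : HasDerivAt (fun x => β x - C / k * x) (deriv β r - C / k) r := by
        exact ((hd1 r hr).sub ((hasDerivAt_id r).const_mul (C / k))).congr_deriv (by simp)
      have h2 := hnum.div (sqrt_hasDerivAt hr2) hs.ne'
      refine h2.congr_deriv (Eq.symm ?_)
      have key : (r ^ 2 + k) * deriv β r - r * β r = C := hFC r hr
      rw [eq_comm, div_eq_zero_iff]
      left
      have e1 : r / Real.sqrt (r ^ 2 + k) * Real.sqrt (r ^ 2 + k) = r :=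
        div_mul_cancel₀ r hs.ne'
      have expand : ((deriv β r - C / k) * Real.sqrt (r ^ 2 + k) -
          (β r - C / k * r) * (r / Real.sqrt (r ^ 2 + k))) * Real.sqrt (r ^ 2 + k) = 0 := by
        calc ((deriv β r - C / k) * Real.sqrt (r ^ 2 + k) -
              (β r - C / k * r) * (r / Real.sqrt (r ^ 2 + k))) * Real.sqrt (r ^ 2 + k)
            = (deriv β r - C / k) * Real.sqrt (r ^ 2 + k) ^ 2 -
              (β r - C / k * r) * (r / Real.sqrt (r ^ 2 + k) * Real.sqrt (r ^ 2 + k)) := by ring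
          _ = (deriv β r - C / k) * (r ^ 2 + k) - (β r - C / k * r) * r := by rw [hs2, e1]
          _ = 0 := by field_simp; linear_combination k * key
      rcases mul_eq_zero.mp expand with h | h
      · exact h
      · exact absurd h hs.ne'
    refine ⟨G r₀, -C, fun r hr => ?_⟩
    obtain ⟨hr1, hr2⟩ := hIsub hr
    have hs : (0 : ℝ) < Real.sqrt (r ^ 2 + k) := Real.sqrt_pos.mpr hr2
    have hGr : G r = G r₀ := const_of_hasDerivAt_zero hIopen hconv hG hr hr₀
    have : β r - C / k * r = G r₀ * Real.sqrt (r ^ 2 + k) := by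
      rw [← hGr, hGdef]
      field_simp
    have hCk : -(-C / k) = C / k := by ring
    rw [hCk]
    linarith
  · rintro ⟨ct, ch, hform⟩
    intro r hr
    obtain ⟨hr1, hr2⟩ := hIsub hr
    have hs : (0 : ℝ) < Real.sqrt (r ^ 2 + k) := Real.sqrt_pos.mpr hr2
    have hs2 : Real.sqrt (r ^ 2 + k) ^ 2 = r ^ 2 + k := Real.sq_sqrt hr2.le
    set φ1 : ℝ → ℝ := fun x => -(ch / k) + ct * (x / Real.sqrt (x ^ 2 + k)) with hφ1def
    have hφ : ∀ x ∈ I, HasDerivAt (fun y => -(ch / k) * y + ct * Real.sqrt (y ^ 2 + k)) (φ1 x) x := by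
      intro x hx
      obtain ⟨hx1, hx2⟩ := hIsub hx
      have := (((hasDerivAt_id x).const_mul (-(ch / k)))).add ((sqrt_hasDerivAt hx2).const_mul ct)
      exact this.congr_deriv (by simp only [hφ1def]; ring)
    have hderiv1 : ∀ x ∈ I, deriv β x = φ1 x := by
      intro x hx
      have heq : β =ᶠ[nhds x] fun y => -(ch / k) * y + ct * Real.sqrt (y ^ 2 + k) :=
        Filter.eventuallyEq_of_mem (hIopen.mem_nhds hx) (fun y hy => hform y hy)
      rw [heq.deriv_eq, (hφ x hx).deriv]
    have hφ1d : HasDerivAt φ1 (ct * (k / (Real.sqrt (r ^ 2 + k) * (r ^ 2 + k)))) r := by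
      have hquot := (hasDerivAt_id r).div (sqrt_hasDerivAt hr2) hs.ne'
      have : HasDerivAt φ1
          (0 + ct * ((1 * Real.sqrt (r ^ 2 + k) - r * (r / Real.sqrt (r ^ 2 + k))) /
            Real.sqrt (r ^ 2 + k) ^ 2)) r :=
        (hasDerivAt_const r (-(ch / k))).add (hquot.const_mul ct)
      refine this.congr_deriv (Eq.symm ?_)
      field_simp
      rw [hs2]; ring
    have hderiv2 : deriv (deriv β) r = ct * (k / (Real.sqrt (r ^ 2 + k) * (r ^ 2 + k))) := by
      have heq : deriv β =ᶠ[nhds r] φ1 :=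
        Filter.eventuallyEq_of_mem (hIopen.mem_nhds hr) (fun y hy => hderiv1 y hy)
      rw [heq.deriv_eq, hφ1d.deriv]
    rw [hform r hr, hderiv1 r hr, hderiv2, hφ1def]
    field_simp
    linear_combination (-(2 * k * ct)) * hs2
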